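/- Let ℓ : ℝ → ℝ be convex and continuously differentiable, fix x ∈ ℝ, and for γ > 0 set p_γ = prox_ℓ(x, 1/γ). Then for γ₂ > γ₁ > 0: (x - p_{γ₂})² - (x - p_{γ₁})² ≤ - (γ₁/(γ₂ - γ₁)) · (p_{γ₁} - p_{γ₂})². -/

import Mathlib

/-- For ℓ convex and C¹ and γ₂ > γ₁ > 0, with p₁, p₂ the proximal points of x
at parameters 1/γ₁, 1/γ₂:
(x - p₂)² - (x - p₁)² ≤ -(γ₁/(γ₂-γ₁))·(p₁-p₂)². -/
theorem stmt8 (ℓ : ℝ → ℝ) (hconv : ConvexOn ℝ Set.univ ℓ)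
    (hdiff : Differentiable ℝ ℓ) (hcont : Continuous (deriv ℓ))
    (x γ₁ γ₂ p₁ p₂ : ℝ) (hγ₁ : 0 < γ₁) (hγ₂ : γ₁ < γ₂)
    (hp₁ : ∀ u : ℝ, γ₁ / 2 * (x - p₁)^2 + ℓ p₁ ≤ γ₁ / 2 * (x - u)^2 + ℓ u)
    (hp₂ : ∀ u : ℝ, γ₂ / 2 * (x - p₂)^2 + ℓ p₂ ≤ γ₂ / 2 * (x - u)^2 + ℓ u) :
    (x - p₂)^2 - (x - p₁)^2 ≤ -(γ₁ / (γ₂ - γ₁)) * (p₁ - p₂)^2 := by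
  have hsub : (0:ℝ) < γ₂ - γ₁ := sub_pos.mpr hγ₂
  -- derivative of ℓ at p₁ equals γ₁ (x - p₁)
  have hg : ∀ u : ℝ, HasDerivAt (fun u => γ₁ / 2 * (x - u)^2 + ℓ u)
      (γ₁ * (u - x) + deriv ℓ u) u := by
    intro u
    have h1 : HasDerivAt (fun u : ℝ => γ₁ / 2 * (x - u)^2) (γ₁ * (u - x)) u := by
      have : HasDerivAt (fun u : ℝ => (x - u)^2) (2 * (x - u) * (-1)) u := by
        simpa using ((hasDerivAt_id u).const_sub x).fun_pow 2
      simpa using (this.const_mul (γ₁ / 2)).congr_deriv (by ring)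
    exact h1.add (hdiff u).hasDerivAt
  have hmin : IsLocalMin (fun u => γ₁ / 2 * (x - u)^2 + ℓ u) p₁ :=
    Filter.Eventually.of_forall (fun u => hp₁ u)
  have hderiv0 : γ₁ * (p₁ - x) + deriv ℓ p₁ = 0 := by
    have := hmin.hasDerivAt_eq_zero (hg p₁)
    linarith [this]
  have hdp₁ : deriv ℓ p₁ = γ₁ * (x - p₁) := by linarith
  -- tangent line inequality from convexity
  have htan : deriv ℓ p₁ * (p₂ - p₁) ≤ ℓ p₂ - ℓ p₁ := by
    rcases lt_trichotomy p₁ p₂ with h | h | h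
    · have := hconv.deriv_le_slope (Set.mem_univ p₁) (Set.mem_univ p₂) h
        (hdiff p₁)
      rw [slope_def_field] at this
      have hd : 0 < p₂ - p₁ := sub_pos.mpr h
      calc deriv ℓ p₁ * (p₂ - p₁) ≤ (ℓ p₂ - ℓ p₁) / (p₂ - p₁) * (p₂ - p₁) := by
            exact mul_le_mul_of_nonneg_right this hd.le
        _ = ℓ p₂ - ℓ p₁ := by field_simp
    · simp [h]
    · have := hconv.slope_le_deriv (Set.mem_univ p₂) (Set.mem_univ p₁) h
        (hdiff p₁)
      rw [slope_def_field] at this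
      have hd : 0 < p₁ - p₂ := sub_pos.mpr h
      have h2 : (ℓ p₁ - ℓ p₂) / (p₁ - p₂) ≤ deriv ℓ p₁ := this
      have h3 : ℓ p₁ - ℓ p₂ ≤ deriv ℓ p₁ * (p₁ - p₂) := by
        rw [div_le_iff₀ hd] at h2; exact h2
      nlinarith
  have hkey := hp₂ p₁
  rw [hdp₁] at htan
  rw [show -(γ₁ / (γ₂ - γ₁)) * (p₁ - p₂)^2 = -(γ₁ * (p₁ - p₂)^2) / (γ₂ - γ₁) by ring,
    le_div_iff₀ hsub]
  nlinarith [htan, hkey]
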